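/- arXiv:2008.11066 — 2 statements merged into one kernel-verified Lean document; each statement's English description precedes it below -/
import Mathlib

section
/- Action of the rate matrix on graph observables (the jump formula): Let C be an adhesive category in which every composable pair of monomorphisms has an FPBC. Fix a rule α : L ⇀ R and objects F and G. Let M_R (respectively M_L) be a finite complete set of representatives of the isomorphism classes of minimal gluings of R and F (respectively of L and F), and let RMG ⊆ M_R be the set of those μ = (μ₁ : R ⟶ μ̂, μ₂ : F ⟶ μ̂) whose first leg μ₁ is derivable by α. For each μ ∈ RMG fix a derivation μ₁ ⇒[α†] d_μ with comatch d_μ : L ⟶ S_μ, and for each match f ∈ mchs(L, G) fix a derivation f ⇒[α] α(f) with comatch α(f) : R ⟶ H_f. Assume all the match sets involved are finite. Then, as an identity of integers, Σ_{f ∈ mchs(L, G)} (|mchs(F, H_f)| − |mchs(F, G)|) = Σ_{μ ∈ RMG} |mchs(S_μ, G)| − Σ_{ν ∈ M_L} |mchs(ν̂, G)|, where ν̂ denotes the codomain (tip) of the minimal gluing ν. -/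
open CategoryTheory Limits

universe v u

variable {C : Type u} [Category.{v} C]

/-- `IsFPBC f₁ f₂ g₁ g₂` states that `(g₁ : X ⟶ W, g₂ : W ⟶ Z)` is a final pullback
complement of the composable pair `(f₁ : X ⟶ Y, f₂ : Y ⟶ Z)`. -/
structure IsFPBC {X Y Z W : C} (f₁ : X ⟶ Y) (f₂ : Y ⟶ Z) (g₁ : X ⟶ W) (g₂ : W ⟶ Z) :
    Prop where
  isPullback : IsPullback f₁ g₁ f₂ g₂
  final : ∀ {P Q : C} (f₁' : P ⟶ Y) (g₁' : P ⟶ Q) (g₂' : Q ⟶ Z),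
      IsPullback f₁' g₁' f₂ g₂' → ∀ p : P ⟶ X, p ≫ f₁ = f₁' →
      ∃! u : Q ⟶ W, u ≫ g₂ = g₂' ∧ g₁' ≫ u = p ≫ g₁

/-- A rule `L ⇀ R` is a span of monomorphisms. -/
structure Rule (L R : C) where
  K : C
  left : K ⟶ L
  right : K ⟶ R
  mono_left : Mono left
  mono_right : Mono right

/-- The reverse `α† : R ⇀ L` of a rule `α : L ⇀ R`. -/
def Rule.rev {L R : C} (α : Rule L R) : Rule R L :=
  ⟨α.K, α.right, α.left, α.mono_right, α.mono_left⟩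

/-- `IsDerivation α f g β`: the comatch `g : R ⟶ H` is derived from the match `f : L ⟶ G`
by the rule `α : L ⇀ R`, with corule `β : G ⇀ H`. -/
def IsDerivation {L R G H : C} (α : Rule L R) (f : L ⟶ G) (g : R ⟶ H) (β : Rule G H) :
    Prop :=
  ∃ h : α.K ⟶ β.K, Mono h ∧ IsFPBC α.left f h β.left ∧ IsPushout α.right h g β.right

/-- A match `g : R ⟶ H` is derivable by a rule `α : L ⇀ R` if `f ⇒[α] g` for some match `f`. -/
def Derivable {L R H : C} (α : Rule L R) (g : R ⟶ H) : Prop :=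
  ∃ (G : C) (f : L ⟶ G) (β : Rule G H), Mono f ∧ IsDerivation α f g β

/-- A gluing of `G₁` and `G₂`: a cospan of monomorphisms. -/
structure Gluing (G₁ G₂ : C) where
  U : C
  i₁ : G₁ ⟶ U
  i₂ : G₂ ⟶ U
  mono₁ : Mono i₁
  mono₂ : Mono i₂

/-- A gluing is minimal if every monomorphism through which both legs factor is an iso. -/
def Gluing.Minimal {G₁ G₂ : C} (gl : Gluing G₁ G₂) : Prop :=
  ∀ (V : C) (m : V ⟶ gl.U), Mono m →
    (∃ j₁ : G₁ ⟶ V, j₁ ≫ m = gl.i₁) → (∃ j₂ : G₂ ⟶ V, j₂ ≫ m = gl.i₂) → IsIso m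

/-- Two gluings are isomorphic if there is an isomorphism of their tips commuting
with the legs. -/
def GluingIso {G₁ G₂ : C} (g h : Gluing G₁ G₂) : Prop :=
  ∃ u : g.U ≅ h.U, g.i₁ ≫ u.hom = h.i₁ ∧ g.i₂ ≫ u.hom = h.i₂

/-- The set (type) of matches (monomorphisms) from `A` to `B`. -/
abbrev Mchs (A B : C) := {f : A ⟶ B // Mono f}

section Helpers

/-- H0: pullback of a mono along a map factoring through it. -/
lemma isPullback_id_comp_of_mono {P X Z : C} (m : X ⟶ Z) [Mono m] (p : P ⟶ X) :
    IsPullback (𝟙 P) p (p ≫ m) m := by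
  refine IsPullback.of_isLimit' ⟨by simp⟩ ?_
  refine PullbackCone.IsLimit.mk _ (fun s => s.fst) (by simp) ?_ ?_
  · intro s
    have := s.condition
    exact (cancel_mono m).mp (by simpa using this)
  · intro s t h1 _; simpa using h1

/-- H4: extend a pullback square by composing with a mono. -/
lemma isPullback_comp_mono {P X Y Z Z' : C} {fst : P ⟶ X} {snd : P ⟶ Y} {f : X ⟶ Z}
    {g : Y ⟶ Z} (h : IsPullback fst snd f g) (m : Z ⟶ Z') [Mono m] :
    IsPullback fst snd (f ≫ m) (g ≫ m) := by
  refine IsPullback.of_isLimit' ⟨by rw [← Category.assoc, ← Category.assoc, h.w]⟩ ?_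
  refine PullbackCone.IsLimit.mk _
    (fun s => h.lift s.fst s.snd ?_) ?_ ?_ ?_
  · have := s.condition
    exact (cancel_mono m).mp (by simpa using this)
  · intro s; exact h.lift_fst _ _ _
  · intro s; exact h.lift_snd _ _ _
  · intro s t h1 h2
    refine h.hom_ext ?_ ?_
    · rw [h.lift_fst]; simpa using h1
    · rw [h.lift_snd]; simpa using h2

lemma mono_fst_of_isPullback {P X Y Z : C} {fst : P ⟶ X} {snd : P ⟶ Y} {f : X ⟶ Z}
    {g : Y ⟶ Z} (h : IsPullback fst snd f g) [Mono g] : Mono fst := by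
  constructor
  intro T u v huv
  refine h.hom_ext huv ((cancel_mono g).mp ?_)
  simp only [Category.assoc, ← h.w]
  simp only [← Category.assoc]
  rw [huv]

lemma mono_snd_of_isPullback {P X Y Z : C} {fst : P ⟶ X} {snd : P ⟶ Y} {f : X ⟶ Z}
    {g : Y ⟶ Z} (h : IsPullback fst snd f g) [Mono f] : Mono snd :=
  mono_fst_of_isPullback h.flip

/-- pushout of a span whose first leg is iso has iso `inr`. -/
lemma isIso_inr_of_isPushout {W X Y Z : C} {f : W ⟶ X} {g : W ⟶ Y} {h : X ⟶ Z}
    {i : Y ⟶ Z} (H : IsPushout f g h i) [IsIso f] : IsIso i := by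
  refine ⟨H.desc (inv f ≫ g) (𝟙 Y) (by simp), H.inr_desc _ _ _, ?_⟩
  refine H.hom_ext ?_ ?_
  · rw [← Category.assoc, H.inl_desc, Category.assoc, ← H.w, ← Category.assoc]
    simp
  · rw [← Category.assoc, H.inr_desc]; simp

/-- FPBC's are unique up to canonical iso. -/
lemma IsFPBC.uniq {X Y Z W W' : C} {f₁ : X ⟶ Y} {f₂ : Y ⟶ Z} {g₁ : X ⟶ W} {g₂ : W ⟶ Z}
    {g₁' : X ⟶ W'} {g₂' : W' ⟶ Z} (H : IsFPBC f₁ f₂ g₁ g₂) (H' : IsFPBC f₁ f₂ g₁' g₂') :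
    ∃ ψ : W ≅ W', g₁ ≫ ψ.hom = g₁' ∧ ψ.hom ≫ g₂' = g₂ := by
  obtain ⟨u, ⟨hu1, hu2⟩, -⟩ := H'.final f₁ g₁ g₂ H.isPullback (𝟙 X) (by simp)
  obtain ⟨v, ⟨hv1, hv2⟩, -⟩ := H.final f₁ g₁' g₂' H'.isPullback (𝟙 X) (by simp)
  simp only [Category.id_comp] at hu2 hv2
  obtain ⟨w, -, hwu⟩ := H.final f₁ g₁ g₂ H.isPullback (𝟙 X) (by simp)
  have h1 : u ≫ v = 𝟙 W := by
    rw [hwu (u ≫ v) ⟨by rw [Category.assoc, hv1, hu1], by simp [← Category.assoc, hu2, hv2]⟩,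
      hwu (𝟙 W) ⟨by simp, by simp⟩]
  obtain ⟨w', -, hwu'⟩ := H'.final f₁ g₁' g₂' H'.isPullback (𝟙 X) (by simp)
  have h2 : v ≫ u = 𝟙 W' := by
    rw [hwu' (v ≫ u) ⟨by rw [Category.assoc, hu1, hv1], by simp [← Category.assoc, hv2, hu2]⟩,
      hwu' (𝟙 W') ⟨by simp, by simp⟩]
  exact ⟨⟨u, v, h1, h2⟩, by simpa using hu2, hu1⟩

/-- monos are preserved by taking FPBCs: the complement leg is mono. -/
lemma IsFPBC.mono_g₂ [Adhesive C] {X Y Z W : C} {f₁ : X ⟶ Y} {f₂ : Y ⟶ Z} {g₁ : X ⟶ W}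
    {g₂ : W ⟶ Z} (H : IsFPBC f₁ f₂ g₁ g₂) [Mono f₁] [Mono f₂] : Mono g₂ := by
  constructor
  intro T x y hxy
  have hP : IsPullback (pullback.fst f₂ (x ≫ g₂)) (pullback.snd f₂ (x ≫ g₂)) f₂ (x ≫ g₂) :=
    IsPullback.of_hasPullback _ _
  set prY := pullback.fst f₂ (x ≫ g₂)
  set prT := pullback.snd f₂ (x ≫ g₂)
  have hx : prY ≫ f₂ = (prT ≫ x) ≫ g₂ := by simpa [Category.assoc] using hP.w
  have hy : prY ≫ f₂ = (prT ≫ y) ≫ g₂ := by rw [hx]; simp [Category.assoc, hxy]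
  let px := H.isPullback.lift prY (prT ≫ x) hx
  let py := H.isPullback.lift prY (prT ≫ y) hy
  have hpxy : px = py := by
    have : px ≫ f₁ = py ≫ f₁ := by
      rw [H.isPullback.lift_fst, H.isPullback.lift_fst]
    exact (cancel_mono f₁).mp this
  obtain ⟨u, -, huniq⟩ := H.final prY prT (x ≫ g₂) hP px (H.isPullback.lift_fst _ _ _)
  have h1 : x = u := huniq x ⟨rfl, (H.isPullback.lift_snd prY (prT ≫ x) hx).symm⟩
  have h2 : y = u := by
    refine huniq y ⟨hxy.symm, ?_⟩
    show prT ≫ y = px ≫ g₁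
    rw [hpxy]
    exact (H.isPullback.lift_snd prY (prT ≫ y) hy).symm
  rw [h1, h2]

end Helpers

/-- The Lack–Sobociński union lemma: in an adhesive category, the comparison map from
the pushout of a pullback of monos to the common codomain is a mono. -/
lemma mono_union [Adhesive C] {P A B Z Q : C} {a : A ⟶ Z} {b : B ⟶ Z} [Mono a] [Mono b]
    {p₁ : P ⟶ A} {p₂ : P ⟶ B} (hP : IsPullback p₁ p₂ a b)
    {ja : A ⟶ Q} {jb : B ⟶ Q} (hQ : IsPushout p₁ p₂ ja jb)
    {c : Q ⟶ Z} (hca : ja ≫ c = a) (hcb : jb ≫ c = b) : Mono c := by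
  haveI hm1 : Mono p₁ := mono_fst_of_isPullback hP
  haveI hm2 : Mono p₂ := mono_fst_of_isPullback hP.flip
  haveI hmja : Mono ja := Adhesive.mono_of_isPushout_of_mono_right hQ
  haveI hmjb : Mono jb := Adhesive.mono_of_isPushout_of_mono_left hQ
  have VK := Adhesive.van_kampen hQ
  -- Step 1: the universal property "A = a⁻¹(Q)" (and symmetrically for B)
  have key : ∀ (A' B' : C) (a' : A' ⟶ Z) (b' : B' ⟶ Z) (p₁' : P ⟶ A') (p₂' : P ⟶ B')
      (ja' : A' ⟶ Q) (jb' : B' ⟶ Q), Mono a' → Mono b' → IsPullback p₁' p₂' a' b' →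
      IsPushout p₁' p₂' ja' jb' → ja' ≫ c = a' → jb' ≫ c = b' →
      ∀ {T : C} (x : T ⟶ A') (y : T ⟶ Q), x ≫ a' = y ≫ c → x ≫ ja' = y := by
    intro A' B' a' b' p₁' p₂' ja' jb' hma' hmb' hP' hQ' hca' hcb' T x y hxy
    haveI := hma'; haveI := hmb'
    haveI hm1' : Mono p₁' := mono_fst_of_isPullback hP'
    haveI hm2' : Mono p₂' := mono_fst_of_isPullback hP'.flip
    have VK' := Adhesive.van_kampen hQ'
    -- A'' := pullback of a' and c
    have hA' : IsPullback (pullback.fst a' c) (pullback.snd a' c) a' c :=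
      IsPullback.of_hasPullback a' c
    set prA := pullback.fst a' c with hprA
    set prQ := pullback.snd a' c with hprQ
    have he : (𝟙 A') ≫ a' = ja' ≫ c := by simp [hca']
    set e : A' ⟶ pullback a' c := hA'.lift (𝟙 A') ja' he with hedef
    have he1 : e ≫ prA = 𝟙 A' := hA'.lift_fst _ _ _
    have he2 : e ≫ prQ = ja' := hA'.lift_snd _ _ _
    have hq : p₁' ≫ a' = (p₂' ≫ jb') ≫ c := by
      rw [Category.assoc, hcb', hP'.w]
    set q : P ⟶ pullback a' c := hA'.lift p₁' (p₂' ≫ jb') hq with hqdef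
    have hq1 : q ≫ prA = p₁' := hA'.lift_fst _ _ _
    have hq2 : q ≫ prQ = p₂' ≫ jb' := hA'.lift_snd _ _ _
    -- Claim 1
    have claim1 : IsPullback (𝟙 A') e ja' prQ := by
      refine IsPullback.of_isLimit' ⟨by simpa using he2.symm⟩ ?_
      refine PullbackCone.IsLimit.mk _ (fun s => s.fst) ?_ ?_ ?_
      · intro s; simp
      · intro s
        have hc := s.condition
        have hsa : s.fst = s.snd ≫ prA := by
          rw [← cancel_mono a']
          rw [Category.assoc, hA'.w, ← Category.assoc, ← hc, Category.assoc, hca']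
        refine hA'.hom_ext ?_ ?_
        · rw [Category.assoc, he1, Category.comp_id, ← hsa]
        · rw [Category.assoc, he2, hc]
      · intro s t ht _; simpa using ht
    -- Claim 2
    have claim2 : IsPullback p₂' q jb' prQ := by
      refine IsPullback.of_isLimit' ⟨hq2.symm⟩ ?_
      refine PullbackCone.IsLimit.mk _ (fun s => hP'.lift (s.snd ≫ prA) s.fst ?_) ?_ ?_ ?_
      · rw [Category.assoc, hA'.w, ← Category.assoc, ← s.condition, Category.assoc, hcb']
      · intro s; exact hP'.lift_snd _ _ _
      · intro s
        refine hA'.hom_ext ?_ ?_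
        · rw [Category.assoc, hq1, hP'.lift_fst]
        · rw [Category.assoc, hq2, ← Category.assoc, hP'.lift_snd, s.condition]
      · intro s t h1 h2
        refine hP'.hom_ext ?_ ?_
        · rw [hP'.lift_fst, ← h2, Category.assoc, hq1]
        · rw [hP'.lift_snd, h1]
    -- cube
    have wtop : CommSq p₁' (𝟙 P) e q := by
      constructor
      refine hA'.hom_ext ?_ ?_
      · rw [Category.assoc, he1, Category.comp_id, Category.id_comp, hq1]
      · rw [Category.assoc, he2, Category.id_comp, hq2]; exact hQ'.w
    have top : IsPushout p₁' (𝟙 P) e q := by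
      refine (VK' p₁' (𝟙 P) e q (𝟙 P) (𝟙 A') p₂' prQ
        (IsPullback.of_vert_isIso ⟨by simp⟩) (IsKernelPair.id_of_mono p₂')
        ⟨by rw [he2, Category.id_comp]⟩ ⟨hq2⟩ wtop).mpr ⟨claim1.flip, claim2.flip⟩
    haveI : IsIso e := isIso_inr_of_isPushout top.flip
    -- inv e = prA, and prA ≫ ja' = prQ
    have hinv : prA ≫ e = 𝟙 _ := by
      rw [← cancel_epi e, ← Category.assoc, he1, Category.id_comp, Category.comp_id]
    have hpj : prA ≫ ja' = prQ := by
      rw [← cancel_epi e, ← Category.assoc, he1, Category.id_comp, he2]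
    -- conclude
    have hy : ∃ l, l ≫ prA = x ∧ l ≫ prQ = y := ⟨hA'.lift x y hxy,
      hA'.lift_fst _ _ _, hA'.lift_snd _ _ _⟩
    obtain ⟨l, hl1, hl2⟩ := hy
    rw [← hl1, ← hl2, Category.assoc, hpj]
  -- Step 2: c is mono
  constructor
  intro T u v huv
  have hXu : IsPullback (pullback.fst ja u) (pullback.snd ja u) ja u :=
    IsPullback.of_hasPullback ja u
  have hYu : IsPullback (pullback.fst jb u) (pullback.snd jb u) jb u :=
    IsPullback.of_hasPullback jb u
  haveI : Mono (p₁ ≫ ja) := mono_comp _ _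
  have hWu : IsPullback (pullback.fst (p₁ ≫ ja) u) (pullback.snd (p₁ ≫ ja) u) (p₁ ≫ ja) u :=
    IsPullback.of_hasPullback (p₁ ≫ ja) u
  set sA := pullback.fst ja u
  set sT := pullback.snd ja u
  set rB := pullback.fst jb u
  set rT := pullback.snd jb u
  set wP := pullback.fst (p₁ ≫ ja) u
  set wT := pullback.snd (p₁ ≫ ja) u
  have hf'c : (wP ≫ p₁) ≫ ja = wT ≫ u := by rw [Category.assoc]; exact hWu.w
  set f' := hXu.lift (wP ≫ p₁) wT hf'c with hf'def
  have hg'c : (wP ≫ p₂) ≫ jb = wT ≫ u := by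
    rw [Category.assoc, ← hQ.w, ← Category.assoc]; exact hf'c
  set g' := hYu.lift (wP ≫ p₂) wT hg'c with hg'def
  have hf1 : f' ≫ sA = wP ≫ p₁ := hXu.lift_fst _ _ _
  have hf2 : f' ≫ sT = wT := hXu.lift_snd _ _ _
  have hg1 : g' ≫ rB = wP ≫ p₂ := hYu.lift_fst _ _ _
  have hg2 : g' ≫ rT = wT := hYu.lift_snd _ _ _
  -- back faces
  have back1 : IsPullback f' wP sA p₁ := by
    refine IsPullback.of_isLimit' ⟨hf1⟩ ?_
    refine PullbackCone.IsLimit.mk _ (fun s => hWu.lift (s.snd) (s.fst ≫ sT) ?_) ?_ ?_ ?_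
    · rw [← Category.assoc, ← s.condition, Category.assoc, Category.assoc, hXu.w]
    · intro s
      refine hXu.hom_ext ?_ ?_
      · rw [Category.assoc, hf1, ← Category.assoc, hWu.lift_fst, s.condition]
      · rw [Category.assoc, hf2, hWu.lift_snd]
    · intro s; exact hWu.lift_fst _ _ _
    · intro s t h1 h2
      refine hWu.hom_ext ?_ ?_
      · rw [hWu.lift_fst, h2]
      · rw [hWu.lift_snd, ← h1, Category.assoc, hf2]
  have back2 : IsPullback g' wP rB p₂ := by
    refine IsPullback.of_isLimit' ⟨hg1⟩ ?_
    refine PullbackCone.IsLimit.mk _ (fun s => hWu.lift (s.snd) (s.fst ≫ rT) ?_) ?_ ?_ ?_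
    · simp only [Category.assoc]
      rw [hQ.w, ← Category.assoc, ← s.condition, Category.assoc, hYu.w]
    · intro s
      refine hYu.hom_ext ?_ ?_
      · rw [Category.assoc, hg1, ← Category.assoc, hWu.lift_fst, s.condition]
      · rw [Category.assoc, hg2, hWu.lift_snd]
    · intro s; exact hWu.lift_fst _ _ _
    · intro s t h1 h2
      refine hWu.hom_ext ?_ ?_
      · rw [hWu.lift_fst, h2]
      · rw [hWu.lift_snd, ← h1, Category.assoc, hg2]
  have wtop : CommSq f' g' sT rT := ⟨by rw [hf2, hg2]⟩
  have top : IsPushout f' g' sT rT :=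
    (Adhesive.van_kampen hQ f' g' sT rT wP sA rB u back1 back2
      ⟨hXu.w.symm⟩ ⟨hYu.w.symm⟩ wtop).mpr ⟨hXu.flip, hYu.flip⟩
  -- conclude u = v
  have hA : sT ≫ u = sT ≫ v := by
    rw [← hXu.w]
    refine key A B a b p₁ p₂ ja jb ‹Mono a› ‹Mono b› hP hQ hca hcb sA (sT ≫ v) ?_
    rw [← hca, ← Category.assoc, hXu.w, Category.assoc, Category.assoc, huv]
  have hB : rT ≫ u = rT ≫ v := by
    rw [← hYu.w]
    refine key B A b a p₂ p₁ jb ja ‹Mono b› ‹Mono a› hP.flip hQ.flip hcb hca rB (rT ≫ v) ?_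
    rw [← hcb, ← Category.assoc, hYu.w, Category.assoc, Category.assoc, huv]
  exact top.hom_ext hA hB


section FPBClemmas
variable [Adhesive C]

/-- In an adhesive category, a pushout along a mono is a final pullback complement. -/
lemma isFPBC_of_isPushout {X Y Z W : C} {f₁ : X ⟶ Y} {f₂ : Y ⟶ Z} {g₁ : X ⟶ W}
    {g₂ : W ⟶ Z} [Mono f₁] (H : IsPushout f₁ g₁ f₂ g₂) : IsFPBC f₁ f₂ g₁ g₂ := by
  haveI : Mono g₂ := Adhesive.mono_of_isPushout_of_mono_left H
  refine ⟨Adhesive.isPullback_of_isPushout_of_mono_left H, ?_⟩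
  intro P Q f₁' g₁' g₂' hpb p hp
  have hW' : IsPullback (pullback.fst g₂ g₂') (pullback.snd g₂ g₂') g₂ g₂' :=
    IsPullback.of_hasPullback g₂ g₂'
  set w₁ := pullback.fst g₂ g₂'
  set w₂ := pullback.snd g₂ g₂'
  have hgc : (p ≫ g₁) ≫ g₂ = g₁' ≫ g₂' := by
    rw [Category.assoc, ← H.w, ← Category.assoc, hp, hpb.w]
  set gh := hW'.lift (p ≫ g₁) g₁' hgc with hghdef
  have hgh1 : gh ≫ w₁ = p ≫ g₁ := hW'.lift_fst _ _ _
  have hgh2 : gh ≫ w₂ = g₁' := hW'.lift_snd _ _ _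
  have back1 : IsPullback (𝟙 P) p f₁' f₁ := hp ▸ isPullback_id_comp_of_mono f₁ p
  have cond : ∀ s : PullbackCone w₁ g₁, (s.snd ≫ f₁) ≫ f₂ = (s.fst ≫ w₂) ≫ g₂' := by
    intro s
    simp only [Category.assoc]
    rw [H.w, ← Category.assoc, ← s.condition, Category.assoc, hW'.w]
  have back2 : IsPullback gh p w₁ g₁ := by
    refine IsPullback.of_isLimit' ⟨by rw [hgh1]⟩ ?_
    refine PullbackCone.IsLimit.mk _ (fun s => hpb.lift (s.snd ≫ f₁) (s.fst ≫ w₂) (cond s))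
      ?_ ?_ ?_
    · intro s
      have hsp : hpb.lift (s.snd ≫ f₁) (s.fst ≫ w₂) (cond s) ≫ p = s.snd := by
        rw [← cancel_mono f₁, Category.assoc, hp, hpb.lift_fst]
      refine hW'.hom_ext ?_ ?_
      · rw [Category.assoc, hgh1, ← Category.assoc, hsp, s.condition]
      · rw [Category.assoc, hgh2, hpb.lift_snd]
    · intro s
      rw [← cancel_mono f₁, Category.assoc, hp, hpb.lift_fst]
    · intro s t h1 h2
      refine hpb.hom_ext ?_ ?_
      · rw [hpb.lift_fst, ← hp, ← Category.assoc, h2]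
      · rw [hpb.lift_snd, ← h1, Category.assoc, hgh2]
  have top : IsPushout (𝟙 P) gh g₁' w₂ :=
    (Adhesive.van_kampen H (𝟙 P) gh g₁' w₂ p f₁' w₁ g₂' back1 back2
      ⟨hpb.w.symm⟩ ⟨hW'.w.symm⟩ ⟨by rw [Category.id_comp, hgh2]⟩).mpr ⟨hpb.flip, hW'.flip⟩
  haveI : IsIso w₂ := isIso_inr_of_isPushout top
  refine ⟨inv w₂ ≫ w₁, ⟨?_, ?_⟩, ?_⟩
  · rw [Category.assoc, hW'.w, ← Category.assoc]; simp
  · rw [← hgh2, Category.assoc, ← Category.assoc w₂, IsIso.hom_inv_id, Category.id_comp, hgh1]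
  · intro u' ⟨hu1, hu2⟩
    have : w₂ ≫ u' = w₁ := by
      rw [← cancel_mono g₂, Category.assoc, hu1, hW'.w]
    rw [← this, ← Category.assoc, IsIso.inv_hom_id, Category.id_comp]

/-- Restriction of a pushout along a mono into the pushout object. -/
lemma isPushout_restrict {K R D H U : C} {α₂ : K ⟶ R} {h₀ : K ⟶ D} {g : R ⟶ H}
    {β₂ : D ⟶ H} [Mono α₂] (hpo : IsPushout α₂ h₀ g β₂) {μ₁ : R ⟶ U} {e : U ⟶ H}
    [Mono e] [Mono μ₁] (hge : μ₁ ≫ e = g) :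
    ∃ (D' : C) (q₁ : D' ⟶ D) (q₂ : D' ⟶ U) (h' : K ⟶ D'),
      IsPullback q₁ q₂ β₂ e ∧ h' ≫ q₁ = h₀ ∧ h' ≫ q₂ = α₂ ≫ μ₁ ∧
        IsPushout α₂ h' μ₁ q₂ := by
  haveI : Mono β₂ := Adhesive.mono_of_isPushout_of_mono_left hpo
  have hD' : IsPullback (pullback.fst β₂ e) (pullback.snd β₂ e) β₂ e :=
    IsPullback.of_hasPullback β₂ e
  set q₁ := pullback.fst β₂ e
  set q₂ := pullback.snd β₂ e
  have hhc : h₀ ≫ β₂ = (α₂ ≫ μ₁) ≫ e := by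
    rw [← hpo.w, Category.assoc, hge]
  set h' := hD'.lift h₀ (α₂ ≫ μ₁) hhc with hh'def
  have hh1 : h' ≫ q₁ = h₀ := hD'.lift_fst _ _ _
  have hh2 : h' ≫ q₂ = α₂ ≫ μ₁ := hD'.lift_snd _ _ _
  have back2 : IsPullback h' (𝟙 K) q₁ h₀ := by
    refine IsPullback.of_isLimit' ⟨by rw [hh1, Category.id_comp]⟩ ?_
    refine PullbackCone.IsLimit.mk _ (fun s => s.snd) ?_ ?_ ?_
    · intro s
      refine hD'.hom_ext ?_ ?_
      · rw [Category.assoc, hh1, s.condition]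
      · rw [← cancel_mono e]
        simp only [Category.assoc]
        rw [reassoc_of% hh2, hge, hpo.w, ← hD'.w, ← Category.assoc, ← Category.assoc,
          s.condition]
    · intro s; simp
    · intro s t _ h2; simpa using h2
  have front1 : IsPullback μ₁ (𝟙 R) e g := by
    have := (isPullback_id_comp_of_mono e μ₁).flip
    rwa [hge] at this
  have top : IsPushout α₂ h' μ₁ q₂ :=
    (Adhesive.van_kampen hpo α₂ h' μ₁ q₂ (𝟙 K) (𝟙 R) q₁ e
      (IsPullback.of_vert_isIso ⟨by simp⟩) back2
      ⟨by rw [hge, Category.id_comp]⟩ ⟨hD'.w.symm⟩ ⟨hh2.symm⟩).mpr ⟨front1, hD'.flip⟩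
  exact ⟨pullback β₂ e, q₁, q₂, h', hD', hh1, hh2, top⟩

end FPBClemmas

section GluingLemmas
variable [Adhesive C]

/-- The union (pushout over pullback) of two subobjects: existence, minimality,
comparison with any other minimal factorization, and joint epiness. -/
lemma union_core {X₁ X₂ G : C} (f : X₁ ⟶ G) (g : X₂ ⟶ G) [Mono f] [Mono g] :
    ∃ (gl₀ : Gluing X₁ X₂) (c : gl₀.U ⟶ G), gl₀.Minimal ∧ Mono c ∧
      gl₀.i₁ ≫ c = f ∧ gl₀.i₂ ≫ c = g ∧
      (∀ (gl : Gluing X₁ X₂), ∀ (m : gl.U ⟶ G), Mono m → gl.i₁ ≫ m = f → gl.i₂ ≫ m = g →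
        ∃ u : gl₀.U ⟶ gl.U, Mono u ∧ gl₀.i₁ ≫ u = gl.i₁ ∧ gl₀.i₂ ≫ u = gl.i₂ ∧ u ≫ m = c) ∧
      (∀ {T : C} (x y : gl₀.U ⟶ T), gl₀.i₁ ≫ x = gl₀.i₁ ≫ y → gl₀.i₂ ≫ x = gl₀.i₂ ≫ y →
        x = y) := by
  have hP : IsPullback (pullback.fst f g) (pullback.snd f g) f g := IsPullback.of_hasPullback f g
  set p₁ := pullback.fst f g
  set p₂ := pullback.snd f g
  haveI hm1 : Mono p₁ := mono_fst_of_isPullback hP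
  haveI hm2 : Mono p₂ := mono_fst_of_isPullback hP.flip
  have hQ : IsPushout p₁ p₂ (pushout.inl p₁ p₂) (pushout.inr p₁ p₂) := IsPushout.of_hasPushout _ _
  set ja := pushout.inl p₁ p₂
  set jb := pushout.inr p₁ p₂
  haveI hmja : Mono ja := Adhesive.mono_of_isPushout_of_mono_right hQ
  haveI hmjb : Mono jb := Adhesive.mono_of_isPushout_of_mono_left hQ
  set c : pushout p₁ p₂ ⟶ G := hQ.desc f g hP.w with hcdef
  have hca : ja ≫ c = f := hQ.inl_desc _ _ _
  have hcb : jb ≫ c = g := hQ.inr_desc _ _ _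
  haveI hmc : Mono c := mono_union hP hQ hca hcb
  refine ⟨⟨pushout p₁ p₂, ja, jb, hmja, hmjb⟩, c, ?_, hmc, hca, hcb, ?_, ?_⟩
  · -- minimality
    intro V mm hmono ⟨j₁, hj₁⟩ ⟨j₂, hj₂⟩
    haveI := hmono
    have hcomm : p₁ ≫ j₁ = p₂ ≫ j₂ := by
      rw [← cancel_mono mm]
      simp only [Category.assoc]
      rw [hj₁, hj₂]
      exact hQ.w
    refine ⟨⟨hQ.desc j₁ j₂ hcomm, ?_, ?_⟩⟩
    · rw [← cancel_mono mm, Category.assoc]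
      have : hQ.desc j₁ j₂ hcomm ≫ mm = 𝟙 _ := by
        refine hQ.hom_ext ?_ ?_
        · rw [← Category.assoc, hQ.inl_desc, hj₁, Category.comp_id]
        · rw [← Category.assoc, hQ.inr_desc, hj₂, Category.comp_id]
      rw [this, Category.comp_id, Category.id_comp]
    · refine hQ.hom_ext ?_ ?_
      · rw [← Category.assoc, hQ.inl_desc, hj₁, Category.comp_id]
      · rw [← Category.assoc, hQ.inr_desc, hj₂, Category.comp_id]
  · -- comparison
    intro gl m hm h1 h2
    haveI := hm
    have hcomm : p₁ ≫ gl.i₁ = p₂ ≫ gl.i₂ := by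
      rw [← cancel_mono m]
      simp only [Category.assoc]
      rw [h1, h2]
      exact hP.w
    refine ⟨hQ.desc gl.i₁ gl.i₂ hcomm, ?_, hQ.inl_desc _ _ _, hQ.inr_desc _ _ _, ?_⟩
    · have hum : hQ.desc gl.i₁ gl.i₂ hcomm ≫ m = c := by
        refine hQ.hom_ext ?_ ?_
        · rw [← Category.assoc, hQ.inl_desc, h1, hca]
        · rw [← Category.assoc, hQ.inr_desc, h2, hcb]
      exact mono_of_mono_fac hum
    · refine hQ.hom_ext ?_ ?_
      · rw [← Category.assoc, hQ.inl_desc, h1, hca]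
      · rw [← Category.assoc, hQ.inr_desc, h2, hcb]
  · -- joint epi
    intro T x y hx hy
    exact hQ.hom_ext hx hy

/-- Minimal gluings have jointly epic legs. -/
lemma Gluing.Minimal.hom_ext {X₁ X₂ : C} {gl : Gluing X₁ X₂} (hgl : gl.Minimal)
    {T : C} {x y : gl.U ⟶ T} (hx : gl.i₁ ≫ x = gl.i₁ ≫ y) (hy : gl.i₂ ≫ x = gl.i₂ ≫ y) :
    x = y := by
  haveI := gl.mono₁; haveI := gl.mono₂
  obtain ⟨gl₀, c, -, -, hca, hcb, cmp, je⟩ := union_core gl.i₁ gl.i₂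
  obtain ⟨u, hu, hu1, hu2, huc⟩ := cmp gl (𝟙 gl.U) (by infer_instance)
    (Category.comp_id _) (Category.comp_id _)
  rw [Category.comp_id] at huc
  subst huc
  haveI : IsIso u := hgl gl₀.U u hu ⟨gl₀.i₁, hu1⟩ ⟨gl₀.i₂, hu2⟩
  rw [← cancel_epi u]
  refine je _ _ ?_ ?_
  · rw [← Category.assoc, hu1, ← Category.assoc, hu1]; exact hx
  · rw [← Category.assoc, hu2, ← Category.assoc, hu2]; exact hy

/-- Comparison of two minimal factorizations of the same cospan of monos. -/
lemma minimal_gluing_comparison {X₁ X₂ G : C} {gl gl' : Gluing X₁ X₂}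
    (hgl : gl.Minimal) (hgl' : gl'.Minimal) {m : gl.U ⟶ G} {m' : gl'.U ⟶ G}
    (hm : Mono m) (hm' : Mono m') (h1 : gl.i₁ ≫ m = gl'.i₁ ≫ m')
    (h2 : gl.i₂ ≫ m = gl'.i₂ ≫ m') :
    ∃ u : gl.U ≅ gl'.U, gl.i₁ ≫ u.hom = gl'.i₁ ∧ gl.i₂ ≫ u.hom = gl'.i₂ ∧
      u.hom ≫ m' = m := by
  haveI := gl.mono₁; haveI := gl.mono₂; haveI := gl'.mono₁; haveI := gl'.mono₂
  haveI := hm; haveI := hm'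
  haveI : Mono (gl.i₁ ≫ m) := mono_comp _ _
  haveI : Mono (gl.i₂ ≫ m) := mono_comp _ _
  obtain ⟨gl₀, c, hmin₀, hmc, hca, hcb, cmp, je⟩ := union_core (gl.i₁ ≫ m) (gl.i₂ ≫ m)
  obtain ⟨u, hu, hu1, hu2, huc⟩ := cmp gl m hm rfl rfl
  obtain ⟨u', hu', hu1', hu2', huc'⟩ := cmp gl' m' hm' h1.symm h2.symm
  haveI : IsIso u := hgl gl₀.U u hu ⟨gl₀.i₁, hu1⟩ ⟨gl₀.i₂, hu2⟩
  haveI : IsIso u' := hgl' gl₀.U u' hu' ⟨gl₀.i₁, hu1'⟩ ⟨gl₀.i₂, hu2'⟩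
  have hiu1 : gl.i₁ ≫ inv u = gl₀.i₁ := by rw [← hu1]; simp
  have hiu2 : gl.i₂ ≫ inv u = gl₀.i₂ := by rw [← hu2]; simp
  refine ⟨(asIso u).symm ≪≫ asIso u', ?_, ?_, ?_⟩
  · show gl.i₁ ≫ inv u ≫ u' = gl'.i₁
    rw [← Category.assoc, hiu1, hu1']
  · show gl.i₂ ≫ inv u ≫ u' = gl'.i₂
    rw [← Category.assoc, hiu2, hu2']
  · show (inv u ≫ u') ≫ m' = m
    rw [Category.assoc, huc', ← huc]
    simp

end GluingLemmas

section GluingDecomposition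
variable [Adhesive C]

lemma gluing_decomposition_bijective {X₁ X₂ G : C} {κ : Type} (N : κ → Gluing X₁ X₂)
    (hmin : ∀ j, (N j).Minimal)
    (hrep : ∀ gl : Gluing X₁ X₂, gl.Minimal → ∃! j : κ, GluingIso gl (N j)) :
    ∃ E : (Σ j : κ, Mchs (N j).U G) → (Mchs X₁ G × Mchs X₂ G), Function.Bijective E := by
  have hmono1 : ∀ (j : κ) (m : Mchs (N j).U G), Mono ((N j).i₁ ≫ m.1) := fun j m => by
    haveI := (N j).mono₁; haveI := m.2; exact mono_comp _ _
  have hmono2 : ∀ (j : κ) (m : Mchs (N j).U G), Mono ((N j).i₂ ≫ m.1) := fun j m => by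
    haveI := (N j).mono₂; haveI := m.2; exact mono_comp _ _
  refine ⟨fun x => (⟨(N x.1).i₁ ≫ x.2.1, hmono1 x.1 x.2⟩, ⟨(N x.1).i₂ ≫ x.2.1,
    hmono2 x.1 x.2⟩), ?_, ?_⟩
  · rintro ⟨j, m⟩ ⟨j', m'⟩ h
    have h1 : (N j).i₁ ≫ m.1 = (N j').i₁ ≫ m'.1 := congrArg (fun p => p.1.1) h
    have h2 : (N j).i₂ ≫ m.1 = (N j').i₂ ≫ m'.1 := congrArg (fun p => p.2.1) h
    obtain ⟨u, hu1, hu2, -⟩ := minimal_gluing_comparison (hmin j) (hmin j') m.2 m'.2 h1 h2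
    have hjj : j = j' := by
      obtain ⟨j₀, -, huniq⟩ := hrep (N j) (hmin j)
      rw [huniq j ⟨Iso.refl _, by simp, by simp⟩, huniq j' ⟨u, hu1, hu2⟩]
    subst hjj
    obtain ⟨w, hw1, hw2, hwm⟩ := minimal_gluing_comparison (hmin j) (hmin j) m.2 m'.2 h1 h2
    have : w.hom = 𝟙 _ := (hmin j).hom_ext (by rw [hw1, Category.comp_id])
      (by rw [hw2, Category.comp_id])
    rw [this, Category.id_comp] at hwm
    have : m = m' := Subtype.ext hwm.symm
    rw [this]
  · rintro ⟨f, g⟩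
    haveI := f.2; haveI := g.2
    obtain ⟨gl₀, c, hmin₀, hmc, hca, hcb, -, -⟩ := union_core f.1 g.1
    obtain ⟨j, ⟨v, hv1, hv2⟩, -⟩ := hrep gl₀ hmin₀
    haveI := hmc
    have hvi1 : (N j).i₁ ≫ v.inv = gl₀.i₁ := by rw [← hv1]; simp
    have hvi2 : (N j).i₂ ≫ v.inv = gl₀.i₂ := by rw [← hv2]; simp
    refine ⟨⟨j, ⟨v.inv ≫ c, mono_comp _ _⟩⟩, ?_⟩
    refine Prod.ext (Subtype.ext ?_) (Subtype.ext ?_)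
    · show (N j).i₁ ≫ v.inv ≫ c = f.1
      rw [← Category.assoc, hvi1, hca]
    · show (N j).i₂ ≫ v.inv ≫ c = g.1
      rw [← Category.assoc, hvi2, hcb]

end GluingDecomposition

section DerivationDecomposition
variable [Adhesive C]

/-- helper: paste a pullback square with a mono factorization. -/
lemma isPullback_paste_mono {K L D2 DD G : C} {a : K ⟶ L} {h₀ : K ⟶ DD} {fL : L ⟶ G}
    {βg : DD ⟶ G} (hbase : IsPullback a h₀ fL βg) {q : D2 ⟶ DD} [Mono q] {h' : K ⟶ D2}
    (hfac : h' ≫ q = h₀) : IsPullback a h' fL (q ≫ βg) := by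
  refine IsPullback.of_isLimit' ⟨by rw [← Category.assoc, hfac, hbase.w]⟩ ?_
  have cond : ∀ s : PullbackCone fL (q ≫ βg), s.fst ≫ fL = (s.snd ≫ q) ≫ βg := by
    intro s
    rw [Category.assoc]
    exact s.condition
  refine PullbackCone.IsLimit.mk _ (fun s => hbase.lift s.fst (s.snd ≫ q) (cond s)) ?_ ?_ ?_
  · intro s; exact hbase.lift_fst _ _ _
  · intro s
    rw [← cancel_mono q, Category.assoc, hfac, hbase.lift_snd]
  · intro s t h1 h2
    refine hbase.hom_ext (by rw [hbase.lift_fst, h1]) ?_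
    rw [hbase.lift_snd, ← hfac, ← Category.assoc, h2]

lemma derivation_decomposition_bijective {L R F G : C} (α : Rule L R)
    {ι : Type} (M : ι → Gluing R F)
    (hmin : ∀ i, (M i).Minimal)
    (hrep : ∀ gl : Gluing R F, gl.Minimal → ∃! i : ι, GluingIso gl (M i))
    (S : ∀ i : ι, Derivable α (M i).i₁ → C)
    (d : ∀ (i : ι) (h : Derivable α (M i).i₁), L ⟶ S i h)
    (hd : ∀ (i : ι) (h : Derivable α (M i).i₁),
      Mono (d i h) ∧ ∃ γ : Rule (M i).U (S i h), IsDerivation α.rev (M i).i₁ (d i h) γ)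
    (Hf : Mchs L G → C)
    (af : ∀ f : Mchs L G, R ⟶ Hf f)
    (haf : ∀ f : Mchs L G, Mono (af f) ∧ ∃ β : Rule G (Hf f), IsDerivation α f.1 (af f) β) :
    ∃ E : (Σ f : Mchs L G, Mchs F (Hf f)) →
      (Σ i' : {i : ι // Derivable α (M i).i₁}, Mchs (S i'.1 i'.2) G),
      Function.Bijective E := by
  haveI hmαl : Mono α.left := α.mono_left
  haveI hmαr : Mono α.right := α.mono_right
  -- fix derivation data
  have haf2 : ∀ f : Mchs L G, ∃ β : Rule G (Hf f),
      ∃ h₀ : α.K ⟶ β.K, Mono h₀ ∧ IsFPBC α.left f.1 h₀ β.left ∧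
        IsPushout α.right h₀ (af f) β.right := fun f => (haf f).2
  choose β h₀ hh₀ hFP hPO using haf2
  have hafm : ∀ f, Mono (af f) := fun f => (haf f).1
  have hd2 : ∀ (i : ι) (h : Derivable α (M i).i₁), ∃ γ : Rule (M i).U (S i h),
      ∃ hk : α.K ⟶ γ.K, Mono hk ∧ IsFPBC α.right (M i).i₁ hk γ.left ∧
        IsPushout α.left hk (d i h) γ.right := fun i h => (hd i h).2
  choose γ k hk hkFP hkPO using hd2
  have hdm : ∀ i h, Mono (d i h) := fun i h => (hd i h).1
  -- monos of the corule legs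
  have hβ₁ : ∀ f, Mono (β f).left := fun f => by
    haveI := f.2; exact (hFP f).mono_g₂
  have hβ₂ : ∀ f, Mono (β f).right := fun f =>
    Adhesive.mono_of_isPushout_of_mono_left (hPO f)
  have hγ₂ : ∀ i h, Mono (γ i h).right := fun i h =>
    Adhesive.mono_of_isPushout_of_mono_left (hkPO i h)
  -- the FPBC square of the reverse derivation is a pushout (since the match is derivable)
  have hDP : ∀ (i : ι) (h : Derivable α (M i).i₁),
      IsPushout α.right (k i h) (M i).i₁ (γ i h).left := by
    intro i h
    obtain ⟨G₀, f₀, β₀, -, hder₀⟩ := id h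
    have hder : ∃ h' : α.K ⟶ β₀.K, Mono h' ∧ IsFPBC α.left f₀ h' β₀.left ∧
        IsPushout α.right h' (M i).i₁ β₀.right := hder₀
    obtain ⟨h₀', -, -, hhPO⟩ := hder
    obtain ⟨φ, hφ1, hφ2⟩ := IsFPBC.uniq (isFPBC_of_isPushout hhPO) (hkFP i h)
    exact IsPushout.of_iso hhPO (Iso.refl _) (Iso.refl _) φ (Iso.refl _) (by simp)
      (by simpa using hφ1) (by simp) (by simpa using hφ2.symm)
  -- the relation
  set Rel : (Σ f : Mchs L G, Mchs F (Hf f)) →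
      (Σ i' : {i : ι // Derivable α (M i).i₁}, Mchs (S i'.1 i'.2) G) → Prop :=
    fun x y => ∃ (e : (M y.1.1).U ⟶ Hf x.1) (θ : (γ y.1.1 y.1.2).K ⟶ (β x.1).K),
      Mono e ∧ (M y.1.1).i₁ ≫ e = af x.1 ∧ (M y.1.1).i₂ ≫ e = x.2.1 ∧
      d y.1.1 y.1.2 ≫ y.2.1 = x.1.1 ∧ k y.1.1 y.1.2 ≫ θ = h₀ x.1 ∧
      θ ≫ (β x.1).left = (γ y.1.1 y.1.2).right ≫ y.2.1 ∧
      θ ≫ (β x.1).right = (γ y.1.1 y.1.2).left ≫ e with hRel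
  -- forward existence
  have ex₁ : ∀ x, ∃ y, Rel x y := by
    rintro ⟨f, n⟩
    haveI := hafm f
    haveI := n.2
    obtain ⟨gl₀, c, hmin₀, hmc, hca, hcb, -, -⟩ := union_core (af f) n.1
    obtain ⟨i, ⟨v, hv1, hv2⟩, -⟩ := hrep gl₀ hmin₀
    haveI := hmc
    set e : (M i).U ⟶ Hf f := v.inv ≫ c with hedef
    haveI hme : Mono e := mono_comp _ _
    have he1 : (M i).i₁ ≫ e = af f := by
      rw [hedef, ← Category.assoc, ← hv1]
      simp [hca]
    have he2 : (M i).i₂ ≫ e = n.1 := by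
      rw [hedef, ← Category.assoc, ← hv2]
      simp [hcb]
    haveI := (M i).mono₁
    obtain ⟨D', q₁, q₂, h', hD', hh1, hh2, hPO'⟩ := isPushout_restrict (hPO f) he1
    haveI hmq₁ : Mono q₁ := mono_fst_of_isPullback hD'
    haveI : Mono (β f).right := hβ₂ f
    haveI hmq₂ : Mono q₂ := mono_fst_of_isPullback hD'.flip
    haveI hmh' : Mono h' := by
      have : Mono (h' ≫ q₁) := by rw [hh1]; exact hh₀ f
      exact mono_of_mono h' q₁
    -- derivability of (M i).i₁
    have hPOG : IsPushout α.left h' (pushout.inl α.left h') (pushout.inr α.left h') :=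
      IsPushout.of_hasPushout _ _
    haveI : Mono (pushout.inl α.left h') := Adhesive.mono_of_isPushout_of_mono_right hPOG
    haveI : Mono (pushout.inr α.left h') := Adhesive.mono_of_isPushout_of_mono_left hPOG
    have hder : Derivable α (M i).i₁ :=
      ⟨pushout α.left h', pushout.inl α.left h',
        ⟨D', pushout.inr α.left h', q₂, inferInstance, inferInstance⟩, inferInstance,
        h', hmh', isFPBC_of_isPushout hPOG, hPO'⟩
    -- compare with the chosen reverse derivation
    obtain ⟨ψ, hψ1, hψ2⟩ := IsFPBC.uniq (isFPBC_of_isPushout hPO') (hkFP i hder)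
    set θ : (γ i hder).K ⟶ (β f).K := ψ.inv ≫ q₁ with hθdef
    have hkθ : k i hder ≫ θ = h₀ f := by
      rw [hθdef, ← hψ1]
      simp [hh1]
    have hθβ₂ : θ ≫ (β f).right = (γ i hder).left ≫ e := by
      have hγ₁ : (γ i hder).left = ψ.inv ≫ q₂ := by rw [← hψ2]; simp
      rw [hθdef, hγ₁]
      simp only [Category.assoc]
      rw [hD'.w]
    -- the comatch m
    have hw : α.left ≫ f.1 = k i hder ≫ θ ≫ (β f).left := by
      rw [← Category.assoc, hkθ]
      exact (hFP f).isPullback.w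
    set m : S i hder ⟶ G := (hkPO i hder).desc f.1 (θ ≫ (β f).left)
      (by rw [hw, Category.assoc]) with hmdef
    have hm1 : d i hder ≫ m = f.1 := (hkPO i hder).inl_desc _ _ _
    have hm2 : (γ i hder).right ≫ m = θ ≫ (β f).left := (hkPO i hder).inr_desc _ _ _
    -- m is a mono, via the union lemma
    haveI := f.2
    haveI : Mono (β f).left := hβ₁ f
    haveI hmθ : Mono θ := by
      rw [hθdef]; exact mono_comp _ _
    haveI : Mono (θ ≫ (β f).left) := mono_comp _ _
    have hpull : IsPullback α.left (k i hder) f.1 (θ ≫ (β f).left) := by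
      have base : IsPullback α.left (h₀ f) f.1 (β f).left := (hFP f).isPullback
      have step : IsPullback α.left h' f.1 (q₁ ≫ (β f).left) :=
        isPullback_paste_mono base hh1
      refine IsPullback.of_iso step (Iso.refl _) (Iso.refl _) ψ (Iso.refl _) (by simp)
        (by simpa using hψ1) (by simp) ?_
      rw [hθdef]
      simp
    haveI hmm : Mono m := mono_union hpull (hkPO i hder) hm1 hm2
    refine ⟨⟨⟨i, hder⟩, ⟨m, hmm⟩⟩, e, θ, hme, he1, he2, hm1, hkθ, hm2.symm, hθβ₂⟩
  -- forward uniqueness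
  have uniq₁ : ∀ x y y', Rel x y → Rel x y' → y = y' := by
    rintro ⟨f, n⟩ ⟨⟨i, hi⟩, m⟩ ⟨⟨i', hi'⟩, m'⟩ ⟨e, θ, hme, he1, he2, hm1, hkθ, hθβ₁, hθβ₂⟩
      ⟨e', θ', hme', he1', he2', hm1', hkθ', hθβ₁', hθβ₂'⟩
    haveI := hafm f
    haveI := n.2
    have hii : i = i' := by
      obtain ⟨w, hw1, hw2, -⟩ := minimal_gluing_comparison (hmin i) (hmin i') hme hme'
        (by rw [he1, he1']) (by rw [he2, he2'])
      obtain ⟨i₀, -, huniq⟩ := hrep (M i) (hmin i)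
      rw [huniq i ⟨Iso.refl _, by simp, by simp⟩, huniq i' ⟨w, hw1, hw2⟩]
    subst hii
    have hee : e = e' := (hmin i).hom_ext (by rw [he1, he1']) (by rw [he2, he2'])
    subst hee
    have hθθ : θ = θ' := by
      haveI := hβ₂ f
      rw [← cancel_mono (β f).right, hθβ₂, hθβ₂']
    have hmm : m = m' := by
      refine Subtype.ext ((hkPO i hi).hom_ext (by rw [hm1, hm1']) ?_)
      rw [hθβ₁.symm, hθθ, hθβ₁']
    rw [hmm]
  -- reverse existence
  have ex₂ : ∀ y, ∃ x, Rel x y := by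
    rintro ⟨⟨i, hi⟩, m⟩
    haveI := hdm i hi
    haveI := m.2
    set f : Mchs L G := ⟨d i hi ≫ m.1, mono_comp _ _⟩ with hfdef
    haveI := (M i).mono₁; haveI := (M i).mono₂
    haveI := hafm f
    -- the mediating map θ via finality of the chosen FPBC
    have base : IsPullback α.left (k i hi) (d i hi) (γ i hi).right :=
      Adhesive.isPullback_of_isPushout_of_mono_left (hkPO i hi)
    have hsq : IsPullback α.left (k i hi) f.1 ((γ i hi).right ≫ m.1) :=
      isPullback_comp_mono base m.1
    obtain ⟨θ, ⟨hθ1, hθ2⟩, -⟩ := (hFP f).final α.left (k i hi) ((γ i hi).right ≫ m.1)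
      hsq (𝟙 _) (by simp)
    rw [Category.id_comp] at hθ2
    haveI hmθ : Mono θ := by
      have : Mono (θ ≫ (β f).left) := by
        rw [hθ1]
        haveI := hγ₂ i hi
        exact mono_comp _ _
      exact mono_of_mono θ (β f).left
    -- the embedding e of the minimal gluing into (Hf f)
    have hpoU : IsPushout α.right (k i hi) (M i).i₁ (γ i hi).left := hDP i hi
    have hwe : α.right ≫ af f = k i hi ≫ θ ≫ (β f).right := by
      rw [← Category.assoc, hθ2]
      exact (hPO f).w
    set e : (M i).U ⟶ Hf f := hpoU.desc (af f) (θ ≫ (β f).right) hwe with hedef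
    have he1 : (M i).i₁ ≫ e = af f := hpoU.inl_desc _ _ _
    have heγ : (γ i hi).left ≫ e = θ ≫ (β f).right := hpoU.inr_desc _ _ _
    -- e is a mono, via the union lemma
    haveI : Mono (β f).right := hβ₂ f
    haveI : Mono (θ ≫ (β f).right) := mono_comp _ _
    have base2 : IsPullback α.right (h₀ f) (af f) (β f).right :=
      Adhesive.isPullback_of_isPushout_of_mono_left (hPO f)
    have hpull : IsPullback α.right (k i hi) (af f) (θ ≫ (β f).right) :=
      isPullback_paste_mono base2 hθ2
    haveI hme : Mono e := mono_union hpull hpoU he1 heγ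
    refine ⟨⟨f, ⟨(M i).i₂ ≫ e, mono_comp _ _⟩⟩, e, θ, hme, he1, rfl, rfl, hθ2, hθ1, heγ.symm⟩
  -- reverse uniqueness
  have uniq₂ : ∀ x x' y, Rel x y → Rel x' y → x = x' := by
    rintro ⟨f, n⟩ ⟨f', n'⟩ ⟨⟨i, hi⟩, m⟩ ⟨e, θ, hme, he1, he2, hm1, hkθ, hθβ₁, hθβ₂⟩
      ⟨e', θ', hme', he1', he2', hm1', hkθ', hθβ₁', hθβ₂'⟩
    haveI := hdm i hi
    haveI := m.2
    have hff : f = f' := Subtype.ext (hm1.symm.trans hm1')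
    subst hff
    haveI := hafm f
    have base : IsPullback α.left (k i hi) (d i hi) (γ i hi).right :=
      Adhesive.isPullback_of_isPushout_of_mono_left (hkPO i hi)
    have hsq : IsPullback α.left (k i hi) (d i hi ≫ m.1) ((γ i hi).right ≫ m.1) :=
      isPullback_comp_mono base m.1
    rw [hm1] at hsq
    obtain ⟨θ₀, -, hθuniq⟩ := (hFP f).final α.left (k i hi) ((γ i hi).right ≫ m.1)
      hsq (𝟙 _) (by simp)
    have hθθ : θ = θ' := by
      rw [hθuniq θ ⟨hθβ₁, by rw [hkθ]; simp⟩, hθuniq θ' ⟨hθβ₁', by rw [hkθ']; simp⟩]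
    have hee : e = e' := by
      refine (hDP i hi).hom_ext (by rw [he1, he1']) ?_
      rw [← hθβ₂, ← hθβ₂', hθθ]
    have hnn : n = n' := Subtype.ext (by rw [← he2, ← he2', hee])
    rw [hnn]
  -- assemble the bijection
  refine ⟨fun x => (ex₁ x).choose, ?_, ?_⟩
  · intro x x' hE
    change (ex₁ x).choose = (ex₁ x').choose at hE
    refine uniq₂ x x' ((ex₁ x).choose) (ex₁ x).choose_spec ?_
    rw [hE]
    exact (ex₁ x').choose_spec
  · intro y
    obtain ⟨x, hx⟩ := ex₂ y
    exact ⟨x, uniq₁ x _ y (ex₁ x).choose_spec hx⟩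

end DerivationDecomposition

open scoped Classical in
/-- Action of the rate matrix on graph observables (the jump formula). -/
theorem jump_formula [Adhesive C]
    (hFPBC : ∀ {X Y Z : C} (f₁ : X ⟶ Y) (f₂ : Y ⟶ Z), Mono f₁ → Mono f₂ →
      ∃ (W : C) (g₁ : X ⟶ W) (g₂ : W ⟶ Z), IsFPBC f₁ f₂ g₁ g₂)
    {L R F G : C} (α : Rule L R)
    {ι : Type} [Fintype ι] (M : ι → Gluing R F)
    (hmin : ∀ i, (M i).Minimal)
    (hrep : ∀ gl : Gluing R F, gl.Minimal → ∃! i : ι, GluingIso gl (M i))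
    {κ : Type} [Fintype κ] (N : κ → Gluing L F)
    (hminL : ∀ j, (N j).Minimal)
    (hrepL : ∀ gl : Gluing L F, gl.Minimal → ∃! j : κ, GluingIso gl (N j))
    (S : ∀ i : ι, Derivable α (M i).i₁ → C)
    (d : ∀ (i : ι) (h : Derivable α (M i).i₁), L ⟶ S i h)
    (hd : ∀ (i : ι) (h : Derivable α (M i).i₁),
      Mono (d i h) ∧ ∃ γ : Rule (M i).U (S i h), IsDerivation α.rev (M i).i₁ (d i h) γ)
    [Fintype (Mchs L G)]
    (Hf : Mchs L G → C)
    (af : ∀ f : Mchs L G, R ⟶ Hf f)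
    (haf : ∀ f : Mchs L G, Mono (af f) ∧ ∃ β : Rule G (Hf f), IsDerivation α f.1 (af f) β)
    (hfin1 : ∀ f : Mchs L G, Finite (Mchs F (Hf f)))
    (hfin2 : ∀ (i : ι) (h : Derivable α (M i).i₁), Finite (Mchs (S i h) G))
    (hfin3 : Finite (Mchs F G))
    (hfin4 : ∀ j : κ, Finite (Mchs (N j).U G)) :
    ∑ f : Mchs L G, ((Nat.card (Mchs F (Hf f)) : ℤ) - (Nat.card (Mchs F G) : ℤ)) =
      (∑ i : ι, (if h : Derivable α (M i).i₁ then (Nat.card (Mchs (S i h) G) : ℤ) else 0))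
        - ∑ j : κ, (Nat.card (Mchs (N j).U G) : ℤ) := by
  classical
  haveI : ∀ f : Mchs L G, Fintype (Mchs F (Hf f)) := fun f => @Fintype.ofFinite _ (hfin1 f)
  haveI : Fintype (Mchs F G) := @Fintype.ofFinite _ hfin3
  haveI : ∀ j : κ, Fintype (Mchs (N j).U G) := fun j => @Fintype.ofFinite _ (hfin4 j)
  haveI : ∀ i' : {i : ι // Derivable α (M i).i₁}, Fintype (Mchs (S i'.1 i'.2) G) :=
    fun i' => @Fintype.ofFinite _ (hfin2 i'.1 i'.2)
  obtain ⟨E₁, hE₁⟩ := gluing_decomposition_bijective (G := G) N hminL hrepL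
  obtain ⟨E₂, hE₂⟩ := derivation_decomposition_bijective α M hmin hrep S d hd Hf af haf
  have hn2 : Nat.card (Mchs L G) * Nat.card (Mchs F G) = ∑ j : κ, Nat.card (Mchs (N j).U G) := by
    rw [← Nat.card_prod, ← Nat.card_eq_of_bijective E₁ hE₁]
    simp [Nat.card_eq_fintype_card, Fintype.card_sigma]
  have hn1 : ∑ f : Mchs L G, Nat.card (Mchs F (Hf f)) =
      ∑ i : ι, (if h : Derivable α (M i).i₁ then Nat.card (Mchs (S i h) G) else 0) := by
    have hcard : Nat.card ((f : Mchs L G) × Mchs F (Hf f)) =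
        Nat.card ((i' : {i : ι // Derivable α (M i).i₁}) × Mchs (S i'.1 i'.2) G) :=
      Nat.card_eq_of_bijective E₂ hE₂
    rw [Nat.card_eq_fintype_card, Nat.card_eq_fintype_card, Fintype.card_sigma,
      Fintype.card_sigma] at hcard
    have hsub : ∑ i : ι, (if h : Derivable α (M i).i₁ then Nat.card (Mchs (S i h) G) else 0) =
        ∑ i' : {i : ι // Derivable α (M i).i₁}, Nat.card (Mchs (S i'.1 i'.2) G) := by
      rw [← Finset.sum_filter_of_ne (p := fun i => Derivable α (M i).i₁)
        (by intro x _ hx; by_contra hP; exact hx (dif_neg hP))]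
      rw [Finset.sum_subtype (p := fun i => Derivable α (M i).i₁)
        (Finset.univ.filter (fun i => Derivable α (M i).i₁)) (by simp)
        (fun i => if h : Derivable α (M i).i₁ then Nat.card (Mchs (S i h) G) else 0)]
      exact Finset.sum_congr rfl fun i' _ => dif_pos i'.2
    rw [hsub]
    simp only [Nat.card_eq_fintype_card]
    exact hcard
  rw [Finset.sum_sub_distrib]
  have e1 : ∑ f : Mchs L G, (Nat.card (Mchs F (Hf f)) : ℤ) =
      ∑ i : ι, (if h : Derivable α (M i).i₁ then (Nat.card (Mchs (S i h) G) : ℤ) else 0) := by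
    rw [← Nat.cast_sum, hn1, Nat.cast_sum]
    refine Finset.sum_congr rfl fun i _ => ?_
    by_cases h : Derivable α (M i).i₁
    · rw [dif_pos h, dif_pos h]
    · rw [dif_neg h, dif_neg h, Nat.cast_zero]
  have e2 : ∑ _f : Mchs L G, (Nat.card (Mchs F G) : ℤ) =
      ∑ j : κ, (Nat.card (Mchs (N j).U G) : ℤ) := by
    rw [Finset.sum_const, Finset.card_univ, nsmul_eq_mul, ← Nat.card_eq_fintype_card,
      ← Nat.cast_mul, hn2, Nat.cast_sum]
  rw [e1, e2]
end

section
/- Horizontal composition of final pullback complements: Let C be a category and consider morphisms f₁ : A ⟶ B, f₂ : B ⟶ C, g₁ : A ⟶ D, g₂ : B ⟶ E, g₃ : C ⟶ F, h₁ : D ⟶ E, h₂ : E ⟶ F. If (g₁, h₁) is an FPBC of the composable pair (f₁, g₂) and (g₂, h₂) is an FPBC of the composable pair (f₂, g₃), then (g₁, h₂ ∘ h₁) is an FPBC of the composable pair (f₂ ∘ f₁, g₃). -/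
open CategoryTheory Limits

universe v u

variable {C : Type u} [Category.{v} C]

/-- Horizontal composition of final pullback complements. -/
theorem fpbc_horizontal_comp {A B D E F' : C} {C' : C}
    (f₁ : A ⟶ B) (f₂ : B ⟶ C') (g₁ : A ⟶ D) (g₂ : B ⟶ E) (g₃ : C' ⟶ F')
    (h₁ : D ⟶ E) (h₂ : E ⟶ F')
    (hfpbc₁ : IsFPBC f₁ g₂ g₁ h₁) (hfpbc₂ : IsFPBC f₂ g₃ g₂ h₂) :
    IsFPBC (f₁ ≫ f₂) g₃ g₁ (h₁ ≫ h₂) := by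
  constructor
  · exact hfpbc₁.isPullback.paste_horiz hfpbc₂.isPullback
  · intro P Q f₁' g₁' g₂' hpb p hp
    obtain ⟨u₂, ⟨hu₂₁, hu₂₂⟩, hu₂u⟩ :=
      hfpbc₂.final f₁' g₁' g₂' hpb (p ≫ f₁) (by rw [Category.assoc, hp])
    have hleft : IsPullback (p ≫ f₁) g₁' g₂ u₂ := by
      apply IsPullback.of_right (h₁₂ := f₂) (v₁₃ := g₃) _ hu₂₂.symm hfpbc₂.isPullback
      rw [Category.assoc, hp, hu₂₁]
      exact hpb
    obtain ⟨u, ⟨hu1, hu2⟩, huu⟩ :=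
      hfpbc₁.final (p ≫ f₁) g₁' u₂ hleft p rfl
    refine ⟨u, ⟨by rw [← Category.assoc, hu1, hu₂₁], hu2⟩, ?_⟩
    rintro v ⟨hv1, hv2⟩
    have hvh₁ : v ≫ h₁ = u₂ := by
      apply hu₂u
      constructor
      · rw [Category.assoc]; exact hv1
      · rw [← Category.assoc, hv2, Category.assoc, Category.assoc,
          hfpbc₁.isPullback.w]
    exact huu v ⟨hvh₁, hv2⟩
end
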